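/- arXiv:0810.5246 — 2 statements merged into one kernel-verified Lean document; each statement's English description precedes it below -/
import Mathlib

section
/- With $\Pi_N$ as above, for every $u \in BV(\mathbb{R};\mathbb{R}^n)$ the total variation of $\Pi_N u$ satisfies $\mathrm{TV}(\Pi_N u) \leq 2\,\mathrm{TV}(u)$. -/
open MeasureTheory Set

open scoped ENNReal NNReal

lemma two_value_eVar {α : Type*} [LinearOrder α] {E : Type*} [PseudoEMetricSpace E]
    {f : α → E} {s : Set α} {c : α} {v1 v2 : E}
    (h1 : ∀ x ∈ s, x ≤ c → f x = v1) (h2 : ∀ x ∈ s, c < x → f x = v2) :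
    eVariationOn f s ≤ edist v1 v2 := by
  classical
  apply iSup_le
  rintro ⟨m, ⟨q, hq, hqs⟩⟩
  dsimp only
  have key : ∀ i, edist (f (q (i + 1))) (f (q i)) =
      if q i ≤ c ∧ c < q (i + 1) then edist v1 v2 else 0 := by
    intro i
    by_cases h : q i ≤ c ∧ c < q (i + 1)
    · rw [h1 _ (hqs i) h.1, h2 _ (hqs (i + 1)) h.2, if_pos h, edist_comm]
    · rw [if_neg h]
      rcases le_or_gt (q i) c with h' | h'
      · have h2' : q (i + 1) ≤ c := by
          by_contra hc
          exact h ⟨h', not_le.1 hc⟩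
        rw [h1 _ (hqs (i + 1)) h2', h1 _ (hqs i) h', edist_self]
      · have : c < q (i + 1) := h'.trans_le (hq (Nat.le_succ i))
        rw [h2 _ (hqs (i + 1)) this, h2 _ (hqs i) h', edist_self]
  have hcard : ((Finset.range m).filter (fun i => q i ≤ c ∧ c < q (i + 1))).card ≤ 1 := by
    refine Finset.card_le_one.2 (fun i hi j hj => ?_)
    simp only [Finset.mem_filter] at hi hj
    by_contra hne
    rcases lt_or_gt_of_ne hne with h | h
    · exact absurd ((hq (Nat.succ_le_of_lt h)).trans hj.2.1) (not_le.2 hi.2.2)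
    · exact absurd ((hq (Nat.succ_le_of_lt h)).trans hi.2.1) (not_le.2 hj.2.2)
  calc ∑ i ∈ Finset.range m, edist (f (q (i + 1))) (f (q i))
      = ∑ i ∈ Finset.range m, (if q i ≤ c ∧ c < q (i + 1) then edist v1 v2 else 0) :=
        Finset.sum_congr rfl fun i _ => key i
    _ = ∑ _i ∈ (Finset.range m).filter (fun i => q i ≤ c ∧ c < q (i + 1)), edist v1 v2 := by
        rw [Finset.sum_filter]
    _ = (((Finset.range m).filter (fun i => q i ≤ c ∧ c < q (i + 1))).card : ℝ≥0∞)
          * edist v1 v2 := by rw [Finset.sum_const, nsmul_eq_mul]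
    _ ≤ 1 * edist v1 v2 := by
        gcongr
        exact_mod_cast hcard
    _ = edist v1 v2 := one_mul _


/-- The averaging operator `Π_N`. -/
noncomputable def PiN (n N : ℕ) (u : ℝ → EuclideanSpace ℝ (Fin n)) :
    ℝ → EuclideanSpace ℝ (Fin n) :=
  fun x => ∑ k ∈ (Finset.Icc (-1 - (N : ℤ) ^ 2) (-1 + (N : ℤ) ^ 2) : Finset ℤ),
    Set.indicator (Set.Ioc ((k : ℝ) / N) (((k : ℝ) + 1) / N))
      (fun _ => (N : ℝ) • ∫ ξ in ((k : ℝ) / N)..(((k : ℝ) + 1) / N), u ξ) x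

section eval
variable {n N : ℕ} (hN : 1 ≤ N) (u : ℝ → EuclideanSpace ℝ (Fin n))

/-- value on interval k -/
noncomputable def cval (n N : ℕ) (u : ℝ → EuclideanSpace ℝ (Fin n)) (k : ℤ) :
    EuclideanSpace ℝ (Fin n) :=
  (N : ℝ) • ∫ ξ in ((k : ℝ) / N)..(((k : ℝ) + 1) / N), u ξ

noncomputable def vval (n N : ℕ) (u : ℝ → EuclideanSpace ℝ (Fin n)) (k : ℤ) :
    EuclideanSpace ℝ (Fin n) :=
  if k ∈ Finset.Icc (-1 - (N : ℤ) ^ 2) (-1 + (N : ℤ) ^ 2) then cval n N u k else 0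

lemma mem_Ioc_unique (hN : 1 ≤ N) {j k : ℤ} {x : ℝ}
    (hj : x ∈ Set.Ioc ((j : ℝ) / N) (((j : ℝ) + 1) / N))
    (hk : x ∈ Set.Ioc ((k : ℝ) / N) (((k : ℝ) + 1) / N)) : j = k := by
  have hN0 : (0 : ℝ) < N := by exact_mod_cast hN
  have h1 : (j : ℝ) / N < ((k : ℝ) + 1) / N := lt_of_lt_of_le hj.1 hk.2
  have h2 : (k : ℝ) / N < ((j : ℝ) + 1) / N := lt_of_lt_of_le hk.1 hj.2
  rw [div_lt_div_iff_of_pos_right hN0] at h1 h2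
  have : j < k + 1 := by exact_mod_cast h1
  have : k < j + 1 := by exact_mod_cast h2
  omega

lemma PiN_eval (hN : 1 ≤ N) (k : ℤ) {x : ℝ}
    (hx : x ∈ Set.Ioc ((k : ℝ) / N) (((k : ℝ) + 1) / N)) :
    PiN n N u x = vval n N u k := by
  classical
  unfold PiN vval cval
  by_cases hk : k ∈ Finset.Icc (-1 - (N : ℤ) ^ 2) (-1 + (N : ℤ) ^ 2)
  · rw [if_pos hk]
    rw [Finset.sum_eq_single k]
    · rw [Set.indicator_of_mem hx]
    · intro j _ hjk
      refine Set.indicator_of_notMem (fun hj => hjk ?_) _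
      exact mem_Ioc_unique hN hj hx
    · intro h; exact absurd hk h
  · rw [if_neg hk]
    refine Finset.sum_eq_zero (fun j hj => ?_)
    refine Set.indicator_of_notMem (fun hxj => hk ?_) _
    rwa [mem_Ioc_unique hN hxj hx] at hj

lemma PiN_zero_left (hN : 1 ≤ N) {x : ℝ} (hx : x ≤ ((-1 - (N : ℤ) ^ 2 : ℤ) : ℝ) / N) :
    PiN n N u x = 0 := by
  have hN0 : (0 : ℝ) < N := by exact_mod_cast hN
  refine Finset.sum_eq_zero (fun j hj => ?_)
  refine Set.indicator_of_notMem (fun hxj => ?_) _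
  rw [Finset.mem_Icc] at hj
  have : ((-1 - (N : ℤ) ^ 2 : ℤ) : ℝ) / N ≤ (j : ℝ) / N := by
    gcongr
    exact_mod_cast hj.1
  exact absurd (lt_of_le_of_lt this hxj.1) (not_lt.2 hx)

lemma PiN_zero_right (hN : 1 ≤ N) {x : ℝ}
    (hx : ((-1 + (N : ℤ) ^ 2 : ℤ) : ℝ) / N + 1 / N < x) :
    PiN n N u x = 0 := by
  have hN0 : (0 : ℝ) < N := by exact_mod_cast hN
  refine Finset.sum_eq_zero (fun j hj => ?_)
  refine Set.indicator_of_notMem (fun hxj => ?_) _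
  rw [Finset.mem_Icc] at hj
  have : ((j : ℝ) + 1) / N ≤ ((-1 + (N : ℤ) ^ 2 : ℤ) : ℝ) / N + 1 / N := by
    rw [add_div]
    gcongr
    exact_mod_cast hj.2
  exact absurd (hxj.2.trans this) (not_le.2 hx)

section struct
variable {n N : ℕ} {u : ℝ → EuclideanSpace ℝ (Fin n)}
variable (f : ℝ → EuclideanSpace ℝ (Fin n)) (v : ℤ → EuclideanSpace ℝ (Fin n)) (a : ℤ)

-- abstract structural lemma: if f(k/N)=v(k-1) at grid points, f = v k on Ioc(k/N,(k+1)/N),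
-- f = 0 left of a/N, and the final value is handled via v, then eVar ≤ sum of jumps.
lemma step_eVar_le (hN : 1 ≤ N)
    (hpt : ∀ k : ℤ, f (((k : ℤ) : ℝ) / N) = v (k - 1))
    (hioc : ∀ k : ℤ, ∀ x ∈ Set.Ioc (((k : ℤ) : ℝ) / N) (((k + 1 : ℤ) : ℝ) / N), f x = v k)
    (hleft : ∀ x : ℝ, x ≤ ((a : ℤ) : ℝ) / N → f x = 0)
    (M : ℕ)
    (hright : ∀ x : ℝ, ((a + M : ℤ) : ℝ) / N < x → f x = 0)
    (hvM : v (a + M) = 0) :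
    eVariationOn f Set.univ ≤
      ∑ i ∈ Finset.range (M + 1), edist (v (a + i - 1)) (v (a + i)) := by
  have hN0 : (0 : ℝ) < N := by exact_mod_cast hN
  have claim : ∀ j : ℕ, eVariationOn f (Set.Iic (((a + j : ℤ) : ℝ) / N)) ≤
      ∑ i ∈ Finset.range j, edist (v (a + i - 1)) (v (a + i)) := by
    intro j
    induction j with
    | zero =>
      simp only [Nat.cast_zero, add_zero, Finset.range_zero, Finset.sum_empty]
      have h := two_value_eVar (f := f) (s := Set.Iic (((a : ℤ) : ℝ) / N))
        (c := ((a : ℤ) : ℝ) / N) (v1 := (0 : EuclideanSpace ℝ (Fin n))) (v2 := 0)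
        (fun x hx _ => hleft x hx) (fun x hx hc => absurd (hc.trans_le hx) (lt_irrefl _))
      simpa using h
    | succ j ih =>
      have hc1 : ((a + ((j : ℕ) + 1 : ℕ) : ℤ) : ℝ) = ((a + (j : ℕ) + 1 : ℤ) : ℝ) := by
        push_cast; ring
      have hle : ((a + (j : ℕ) : ℤ) : ℝ) / N ≤ ((a + (j : ℕ) + 1 : ℤ) : ℝ) / N :=
        (div_le_div_iff_of_pos_right hN0).2
          (by exact_mod_cast (show (a + (j : ℕ) : ℤ) ≤ a + (j : ℕ) + 1 by omega))
      rw [hc1, ← Set.Iic_union_Icc_eq_Iic hle,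
        eVariationOn.union f isGreatest_Iic (isLeast_Icc hle), Finset.sum_range_succ]
      refine add_le_add ih ?_
      refine two_value_eVar (c := ((a + (j : ℕ) : ℤ) : ℝ) / N)
        (v1 := v (a + j - 1)) (v2 := v (a + j)) ?_ ?_
      · intro x hx hxc
        have hxe : x = ((a + (j : ℕ) : ℤ) : ℝ) / N := le_antisymm hxc hx.1
        rw [hxe, hpt]
      · intro x hx hxc
        exact hioc (a + j) x ⟨hxc, hx.2⟩
  have huniv : (Set.univ : Set ℝ) =
      Set.Iic (((a + M : ℤ) : ℝ) / N) ∪ Set.Ici (((a + M : ℤ) : ℝ) / N) :=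
    (Set.Iic_union_Ici).symm
  rw [huniv, eVariationOn.union f isGreatest_Iic isLeast_Ici]
  rw [Finset.sum_range_succ]
  refine add_le_add (claim M) ?_
  refine two_value_eVar (c := ((a + M : ℤ) : ℝ) / N)
    (v1 := v (a + M - 1)) (v2 := v (a + M)) ?_ ?_
  · intro x hx hxc
    have : x = ((a + M : ℤ) : ℝ) / N := le_antisymm hxc hx
    rw [this, hpt]
  · intro x _ hxc
    rw [hright x hxc, hvM]

end struct
variable {n N : ℕ} {u : ℝ → EuclideanSpace ℝ (Fin n)}

lemma shift_lintegral (g : ℝ → ℝ≥0∞) (p q : ℝ) :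
    ∫⁻ x in Set.Ioc p (p + q), g x = ∫⁻ t in Set.Ioc 0 q, g (t + p) := by
  have h := (measurePreserving_add_right (volume : Measure ℝ) p).setLIntegral_comp_preimage_emb
    (measurableEmbedding_addRight p) g (Set.Ioc p (p + q))
  have hs : (· + p) ⁻¹' Set.Ioc p (p + q) = Set.Ioc 0 q := by
    ext x
    simp only [Set.mem_preimage, Set.mem_Ioc]
    constructor
    · rintro ⟨h1, h2⟩; exact ⟨by linarith, by linarith⟩
    · rintro ⟨h1, h2⟩; exact ⟨by linarith, by linarith⟩
  rw [← h, hs]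

lemma cval_diff_le (hN : 1 ≤ N) (hu : Integrable u) (k : ℤ) :
    edist (cval n N u k) (cval n N u (k + 1)) ≤
      (N : ℝ≥0∞) * ∫⁻ t in Set.Ioc (0 : ℝ) (1 / N),
        ‖u (t + ((k : ℝ) + 1) / N) - u (t + (k : ℝ) / N)‖₊ := by
  have hN0 : (0 : ℝ) < N := by exact_mod_cast hN
  have h1N : (0 : ℝ) < 1 / N := by positivity
  set p : ℝ := (k : ℝ) / N with hp
  have hq : ((k : ℝ) + 1) / N = p + 1 / N := by rw [hp]; ring
  have hple : p ≤ p + 1 / N := by linarith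
  -- rewrite the second integral as a shifted integral
  have hshift : (∫ ξ in (((k + 1 : ℤ) : ℝ) / N)..((((k + 1 : ℤ) : ℝ) + 1) / N), u ξ)
      = ∫ x in p..(p + 1 / N), u (x + 1 / N) := by
    rw [intervalIntegral.integral_comp_add_right (fun y => u y) (1 / N)]
    congr 1
    · push_cast; rw [hp]; ring
    · push_cast; rw [hp]; ring
  have hsub : cval n N u (k + 1) - cval n N u k
      = (N : ℝ) • ∫ x in p..(p + 1 / N), (u (x + 1 / N) - u x) := by
    rw [intervalIntegral.integral_sub (hu.comp_add_right (1 / N)).intervalIntegrable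
      hu.intervalIntegrable]
    unfold cval
    rw [hshift, smul_sub, ← hp, hq]
  have step1 : edist (cval n N u k) (cval n N u (k + 1))
      = (‖cval n N u (k + 1) - cval n N u k‖₊ : ℝ≥0∞) := by
    rw [edist_comm, edist_eq_enorm_sub, enorm_eq_nnnorm]
  rw [step1, hsub]
  have step2 : (‖(N : ℝ) • ∫ x in p..(p + 1 / N), (u (x + 1 / N) - u x)‖₊ : ℝ≥0∞)
      = (N : ℝ≥0∞) * ‖∫ x in p..(p + 1 / N), (u (x + 1 / N) - u x)‖₊ := by
    rw [nnnorm_smul]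
    push_cast
    simp [Real.nnnorm_natCast]
  rw [step2]
  gcongr
  rw [intervalIntegral.integral_of_le hple]
  calc (‖∫ x in Set.Ioc p (p + 1 / N), (u (x + 1 / N) - u x)‖₊ : ℝ≥0∞)
      ≤ ∫⁻ x in Set.Ioc p (p + 1 / N), ‖u (x + 1 / N) - u x‖₊ :=
        enorm_integral_le_lintegral_enorm _
    _ = ∫⁻ t in Set.Ioc (0:ℝ) (1 / N), ‖u (t + p + 1 / N) - u (t + p)‖₊ :=
        shift_lintegral _ p (1 / N)
    _ = ∫⁻ t in Set.Ioc (0 : ℝ) (1 / N), ‖u (t + ((k : ℝ) + 1) / N) - u (t + (k : ℝ) / N)‖₊ := by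
        apply lintegral_congr
        intro t
        rw [hq, hp]
        ring_nf

lemma middle_sum_le (hN : 1 ≤ N) (hu : Integrable u) (a0 : ℤ) (m : ℕ) :
    ∑ j ∈ Finset.range m, edist (cval n N u (a0 + j)) (cval n N u (a0 + j + 1)) ≤
      eVariationOn u Set.univ := by
  have hN0 : (0 : ℝ) < N := by exact_mod_cast hN
  set V := eVariationOn u Set.univ with hV
  set g : ℕ → ℝ → ℝ≥0∞ := fun j t =>
    (‖u (t + (((a0 + (j : ℤ) : ℤ) : ℝ) + 1) / N) - u (t + ((a0 + (j : ℤ) : ℤ) : ℝ) / N)‖₊ : ℝ≥0∞)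
    with hg
  have hterm : ∀ j : ℕ, edist (cval n N u (a0 + j)) (cval n N u (a0 + j + 1)) ≤
      (N : ℝ≥0∞) * ∫⁻ t in Set.Ioc (0 : ℝ) (1 / N), g j t := fun j =>
    cval_diff_le hN hu (a0 + j)
  have hmeas : ∀ j ∈ Finset.range m,
      AEMeasurable (g j) (volume.restrict (Set.Ioc (0 : ℝ) (1 / N))) := by
    intro j _
    exact (((hu.comp_add_right _).sub (hu.comp_add_right _)).aestronglyMeasurable.enorm).restrict
  have hpt : ∀ t : ℝ, ∑ j ∈ Finset.range m, g j t ≤ V := by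
    intro t
    set w : ℕ → ℝ := fun j => t + ((a0 + (j : ℤ) : ℤ) : ℝ) / N with hw
    have hwmono : Monotone w := by
      intro i j hij
      simp only [hw]
      have h1 : ((a0 + (i : ℤ) : ℤ) : ℝ) ≤ ((a0 + (j : ℤ) : ℤ) : ℝ) := by
        exact_mod_cast (show (a0 + (i : ℤ) : ℤ) ≤ a0 + (j : ℤ) by omega)
      have := (div_le_div_iff_of_pos_right hN0).2 h1
      linarith
    have hgw : ∀ j : ℕ, g j t = edist (u (w (j + 1))) (u (w j)) := by
      intro j
      have h1 : t + (((a0 + (j : ℤ) : ℤ) : ℝ) + 1) / N = w (j + 1) := by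
        simp only [hw]; push_cast; ring
      have h2 : t + ((a0 + (j : ℤ) : ℤ) : ℝ) / N = w j := by simp only [hw]
      rw [hg]
      simp only [h1, h2]
      rw [edist_eq_enorm_sub, enorm_eq_nnnorm]
    calc ∑ j ∈ Finset.range m, g j t = ∑ j ∈ Finset.range m, edist (u (w (j + 1))) (u (w j)) :=
          Finset.sum_congr rfl fun j _ => hgw j
      _ ≤ V := eVariationOn.sum_le (f := u) (n := m) hwmono fun i => Set.mem_univ _
  calc ∑ j ∈ Finset.range m, edist (cval n N u (a0 + j)) (cval n N u (a0 + j + 1))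
      ≤ ∑ j ∈ Finset.range m, (N : ℝ≥0∞) * ∫⁻ t in Set.Ioc (0 : ℝ) (1 / N), g j t :=
        Finset.sum_le_sum fun j _ => hterm j
    _ = (N : ℝ≥0∞) * ∑ j ∈ Finset.range m, ∫⁻ t in Set.Ioc (0 : ℝ) (1 / N), g j t := by
        rw [Finset.mul_sum]
    _ = (N : ℝ≥0∞) * ∫⁻ t in Set.Ioc (0 : ℝ) (1 / N), ∑ j ∈ Finset.range m, g j t := by
        rw [lintegral_finset_sum' _ hmeas]
    _ ≤ (N : ℝ≥0∞) * ∫⁻ _t in Set.Ioc (0 : ℝ) (1 / N), V := by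
        exact mul_le_mul_right (setLIntegral_mono' measurableSet_Ioc fun t _ => hpt t) _
    _ = (N : ℝ≥0∞) * (V * ENNReal.ofReal (1 / N)) := by
        rw [setLIntegral_const, Real.volume_Ioc, sub_zero]
    _ = V * ((N : ℝ≥0∞) * ENNReal.ofReal (1 / N)) := by ring
    _ = V := by
        rw [← ENNReal.ofReal_natCast, ← ENNReal.ofReal_mul (by positivity),
          mul_one_div_cancel hN0.ne', ENNReal.ofReal_one, mul_one]

lemma exists_small_norm (hu : Integrable u) {ε : ℝ≥0} (hε : 0 < ε) {S : Set ℝ}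
    (hS : volume S = ⊤) : ∃ η ∈ S, (‖u η‖₊ : ℝ≥0∞) < ε := by
  by_contra h
  push_neg at h
  have hsub : S ⊆ {x | (ε : ℝ≥0∞) ≤ (‖u x‖₊ : ℝ≥0∞)} := fun x hx => h x hx
  have hεne : (ε : ℝ≥0∞) ≠ 0 := by exact_mod_cast hε.ne'
  have hm := meas_ge_le_lintegral_div hu.aestronglyMeasurable.enorm hεne ENNReal.coe_ne_top
  have h1 : (⊤ : ℝ≥0∞) ≤ (∫⁻ a, (‖u a‖₊ : ℝ≥0∞)) / ε :=
    calc (⊤ : ℝ≥0∞) = volume S := hS.symm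
      _ ≤ volume {x | (ε : ℝ≥0∞) ≤ (‖u x‖₊ : ℝ≥0∞)} := measure_mono hsub
      _ ≤ _ := hm
  have h2 : (∫⁻ a, (‖u a‖₊ : ℝ≥0∞)) / ε < ⊤ := ENNReal.div_lt_top hu.2.ne hεne
  exact absurd (h1.trans_lt h2) (lt_irrefl _)

lemma nnnorm_le_eVar (hu : Integrable u) {s : Set ℝ} (hvol : volume s = ⊤) {x : ℝ}
    (hx : x ∈ s) : (‖u x‖₊ : ℝ≥0∞) ≤ eVariationOn u s := by
  refine ENNReal.le_of_forall_pos_le_add fun ε hε _ => ?_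
  obtain ⟨η, hη, hηε⟩ := exists_small_norm hu hε hvol
  calc (‖u x‖₊ : ℝ≥0∞) = (‖u x - u η + u η‖₊ : ℝ≥0∞) := by rw [sub_add_cancel]
    _ ≤ (‖u x - u η‖₊ : ℝ≥0∞) + (‖u η‖₊ : ℝ≥0∞) := by
        exact_mod_cast nnnorm_add_le _ _
    _ ≤ eVariationOn u s + ε := by
        refine add_le_add ?_ hηε.le
        rw [← enorm_eq_nnnorm, ← edist_eq_enorm_sub]
        exact eVariationOn.edist_le u hx hη

lemma cval_boundary_le (hN : 1 ≤ N) (hu : Integrable u) (k : ℤ) {s : Set ℝ}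
    (hvol : volume s = ⊤)
    (hsub : Set.Ioc ((k : ℝ) / N) (((k : ℝ) + 1) / N) ⊆ s) :
    (‖cval n N u k‖₊ : ℝ≥0∞) ≤ eVariationOn u s := by
  have hN0 : (0 : ℝ) < N := by exact_mod_cast hN
  have hple : (k : ℝ) / N ≤ ((k : ℝ) + 1) / N := by
    apply (div_le_div_iff_of_pos_right hN0).2; linarith
  unfold cval
  rw [intervalIntegral.integral_of_le hple]
  calc (‖(N : ℝ) • ∫ x in Set.Ioc ((k : ℝ) / N) (((k : ℝ) + 1) / N), u x‖₊ : ℝ≥0∞)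
      = (N : ℝ≥0∞) * ‖∫ x in Set.Ioc ((k : ℝ) / N) (((k : ℝ) + 1) / N), u x‖₊ := by
        rw [nnnorm_smul]; push_cast; simp [Real.nnnorm_natCast]
    _ ≤ (N : ℝ≥0∞) * ∫⁻ x in Set.Ioc ((k : ℝ) / N) (((k : ℝ) + 1) / N), (‖u x‖₊ : ℝ≥0∞) :=
        mul_le_mul_right (enorm_integral_le_lintegral_enorm _) _
    _ ≤ (N : ℝ≥0∞) * ∫⁻ _x in Set.Ioc ((k : ℝ) / N) (((k : ℝ) + 1) / N), eVariationOn u s :=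
        mul_le_mul_right (setLIntegral_mono' measurableSet_Ioc fun x hxm =>
          nnnorm_le_eVar hu hvol (hsub hxm)) _
    _ = (N : ℝ≥0∞) * (eVariationOn u s * ENNReal.ofReal (1 / N)) := by
        rw [setLIntegral_const, Real.volume_Ioc,
          show ((k : ℝ) + 1) / N - (k : ℝ) / N = 1 / N by ring]
    _ = eVariationOn u s * ((N : ℝ≥0∞) * ENNReal.ofReal (1 / N)) := by ring
    _ = eVariationOn u s := by
        rw [← ENNReal.ofReal_natCast, ← ENNReal.ofReal_mul (by positivity),
          mul_one_div_cancel hN0.ne', ENNReal.ofReal_one, mul_one]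


/-- For every `u` of bounded variation, `TV(Π_N u) ≤ 2 TV(u)`. -/
theorem stmt1 (n N : ℕ) (hN : 1 ≤ N) (u : ℝ → EuclideanSpace ℝ (Fin n))
    (hu : Integrable u) (hBV : eVariationOn u Set.univ ≠ ⊤) :
    eVariationOn (PiN n N u) Set.univ ≤ 2 * eVariationOn u Set.univ := by
  classical
  have hN0 : (0 : ℝ) < N := by exact_mod_cast hN
  have hN1 : (1 : ℤ) ≤ (N : ℤ) := by exact_mod_cast hN
  set a : ℤ := -1 - (N : ℤ) ^ 2 with ha
  set b : ℤ := -1 + (N : ℤ) ^ 2 with hb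
  set m : ℕ := 2 * N ^ 2 with hm
  have hab : a + 1 ≤ b := by rw [ha, hb]; nlinarith
  have ham : a + (m : ℤ) = b := by rw [ha, hb, hm]; push_cast; ring
  have hIccab : Finset.Icc (-1 - (N : ℤ) ^ 2) (-1 + (N : ℤ) ^ 2) = Finset.Icc a b := by
    rw [ha, hb]
  set v : ℤ → EuclideanSpace ℝ (Fin n) := vval n N u with hv
  set V := eVariationOn u Set.univ with hV
  -- Structural bound
  have hstruct : eVariationOn (PiN n N u) Set.univ ≤
      ∑ i ∈ Finset.range (m + 1 + 1), edist (v (a + i - 1)) (v (a + i)) := by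
    refine step_eVar_le (PiN n N u) v a hN ?_ ?_ ?_ (m + 1) ?_ ?_
    · intro k
      refine PiN_eval u hN (k - 1) ?_
      constructor
      · refine (div_lt_div_iff_of_pos_right hN0).2 ?_
        push_cast; linarith
      · refine le_of_eq ?_
        congr 1
        push_cast; ring
    · intro k x hx
      refine PiN_eval u hN k ?_
      rwa [show (((k + 1 : ℤ)) : ℝ) = ((k : ℝ) + 1) by push_cast; ring] at hx
    · intro x hx
      refine PiN_zero_left u hN ?_
      rwa [← ha]
    · intro x hx
      refine PiN_zero_right u hN ?_
      have hcast : ((a + ((m : ℕ) + 1 : ℕ) : ℤ) : ℝ) / N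
          = ((-1 + (N : ℤ) ^ 2 : ℤ) : ℝ) / N + 1 / N := by
        rw [← add_div]
        congr 1
        have : a + ((m : ℕ) + 1 : ℕ) = b + 1 := by push_cast; omega
        rw [this, hb]
        push_cast; ring
      rwa [hcast] at hx
    · simp only [hv, vval, hIccab]
      rw [if_neg]
      rw [Finset.mem_Icc]
      push_cast
      omega
  -- the three parts of the sum
  have hsplit : ∑ i ∈ Finset.range (m + 1 + 1), edist (v (a + i - 1)) (v (a + i))
      = (∑ i ∈ Finset.range m,
          edist (v (a + ((i : ℕ) + 1 : ℕ) - 1)) (v (a + ((i : ℕ) + 1 : ℕ)))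
        + edist (v (a + ((0 : ℕ) : ℤ) - 1)) (v (a + ((0 : ℕ) : ℤ))))
        + edist (v (a + ((m + 1 : ℕ) : ℤ) - 1)) (v (a + ((m + 1 : ℕ) : ℤ))) := by
    rw [Finset.sum_range_succ, Finset.sum_range_succ']
  -- middle part
  have hmid : ∑ i ∈ Finset.range m,
      edist (v (a + ((i : ℕ) + 1 : ℕ) - 1)) (v (a + ((i : ℕ) + 1 : ℕ))) ≤ V := by
    have hcongr : ∀ i ∈ Finset.range m,
        edist (v (a + ((i : ℕ) + 1 : ℕ) - 1)) (v (a + ((i : ℕ) + 1 : ℕ)))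
        = edist (cval n N u (a + i)) (cval n N u (a + i + 1)) := by
      intro i hi
      rw [Finset.mem_range] at hi
      have e1 : a + (((i : ℕ) + 1 : ℕ) : ℤ) - 1 = a + i := by push_cast; ring
      have e2 : a + (((i : ℕ) + 1 : ℕ) : ℤ) = a + i + 1 := by push_cast; ring
      rw [e1, e2]
      have m1 : v (a + i) = cval n N u (a + i) := by
        simp only [hv, vval, hIccab]
        rw [if_pos]
        rw [Finset.mem_Icc]
        omega
      have m2 : v (a + i + 1) = cval n N u (a + i + 1) := by
        simp only [hv, vval, hIccab]
        rw [if_pos]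
        rw [Finset.mem_Icc]
        omega
      rw [m1, m2]
    rw [Finset.sum_congr rfl hcongr]
    exact middle_sum_le hN hu a m
  -- left boundary
  have hleft : edist (v (a + ((0 : ℕ) : ℤ) - 1)) (v (a + ((0 : ℕ) : ℤ)))
      ≤ eVariationOn u (Set.Iic ((((a : ℤ) : ℝ) + 1) / N)) := by
    have m1 : v (a + ((0 : ℕ) : ℤ) - 1) = 0 := by
      simp only [hv, vval, hIccab]
      rw [if_neg]
      rw [Finset.mem_Icc]
      omega
    have m2 : v (a + ((0 : ℕ) : ℤ)) = cval n N u a := by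
      simp only [hv, vval, hIccab, Nat.cast_zero, add_zero]
      rw [if_pos]
      rw [Finset.mem_Icc]
      omega
    rw [m1, m2, edist_comm, edist_zero_right]
    exact cval_boundary_le hN hu a (Real.volume_Iic) Set.Ioc_subset_Iic_self
  -- right boundary
  have hright : edist (v (a + ((m + 1 : ℕ) : ℤ) - 1)) (v (a + ((m + 1 : ℕ) : ℤ)))
      ≤ eVariationOn u (Set.Ici (((b : ℤ) : ℝ) / N)) := by
    have e1 : a + ((m + 1 : ℕ) : ℤ) - 1 = b := by push_cast; omega
    have e2 : a + ((m + 1 : ℕ) : ℤ) = b + 1 := by push_cast; omega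
    rw [e1, e2]
    have m1 : v b = cval n N u b := by
      simp only [hv, vval, hIccab]
      rw [if_pos]
      rw [Finset.mem_Icc]
      omega
    have m2 : v (b + 1) = 0 := by
      simp only [hv, vval, hIccab]
      rw [if_neg]
      rw [Finset.mem_Icc]
      omega
    rw [m1, m2, edist_zero_right]
    exact cval_boundary_le hN hu b (Real.volume_Ici) (fun x hx => le_of_lt hx.1)
  -- combining the two boundary variations
  have hbdd : eVariationOn u (Set.Iic ((((a : ℤ) : ℝ) + 1) / N))
      + eVariationOn u (Set.Ici (((b : ℤ) : ℝ) / N)) ≤ V := by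
    have hple : (((a : ℤ) : ℝ) + 1) / N ≤ ((b : ℤ) : ℝ) / N := by
      refine (div_le_div_iff_of_pos_right hN0).2 ?_
      exact_mod_cast hab
    calc eVariationOn u (Set.Iic ((((a : ℤ) : ℝ) + 1) / N))
          + eVariationOn u (Set.Ici (((b : ℤ) : ℝ) / N))
        ≤ eVariationOn u (Set.Iic ((((a : ℤ) : ℝ) + 1) / N))
          + eVariationOn u (Set.Ici ((((a : ℤ) : ℝ) + 1) / N)) :=
          add_le_add_right (eVariationOn.mono u (Set.Ici_subset_Ici.2 hple)) _
      _ = eVariationOn u (Set.Iic ((((a : ℤ) : ℝ) + 1) / N)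
            ∪ Set.Ici ((((a : ℤ) : ℝ) + 1) / N)) :=
          (eVariationOn.union u isGreatest_Iic isLeast_Ici).symm
      _ = V := by rw [Set.Iic_union_Ici]
  calc eVariationOn (PiN n N u) Set.univ
      ≤ ∑ i ∈ Finset.range (m + 1 + 1), edist (v (a + i - 1)) (v (a + i)) := hstruct
    _ = _ := hsplit
    _ ≤ (V + eVariationOn u (Set.Iic ((((a : ℤ) : ℝ) + 1) / N)))
          + eVariationOn u (Set.Ici (((b : ℤ) : ℝ) / N)) :=
        add_le_add (add_le_add hmid hleft) hright
    _ = V + (eVariationOn u (Set.Iic ((((a : ℤ) : ℝ) + 1) / N))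
          + eVariationOn u (Set.Ici (((b : ℤ) : ℝ) / N))) := by rw [add_assoc]
    _ ≤ V + V := add_le_add_right hbdd _
    _ = 2 * V := (two_mul V).symm
end eval
end

section
/- Let $u^\epsilon \to u$ in $L^1_{loc}([0,T]\times\mathbb{R};\mathbb{R}^n)$ and suppose the uniform trace estimate $\int_0^T \|u^\epsilon(t,\Gamma(t)) - u^\epsilon(t,\Gamma(t)+x)\|\,dt \leq Kx$ and $\int_0^T \|u(t,\Gamma(t)+x) - u(t,\Gamma(t))\|\,dt \leq Kx$ hold for all small $x > 0$ and all $\epsilon$, with $K$ independent of $\epsilon$ and $x$. Then $u^\epsilon(\cdot,\Gamma(\cdot)) \to u(\cdot,\Gamma(\cdot))$ in $L^1([0,T];\mathbb{R}^n)$. -/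
open MeasureTheory Set Filter
open scoped ENNReal

/-- Lemma 4: from `L¹loc` convergence `u^ν → u` in the `(t,x)`-plane together with
uniform one-sided `L¹`-Lipschitz trace estimates along the curve `Γ`, the traces
along `Γ` converge in `L¹([0,T])`. -/
theorem stmt17 (n : ℕ) (T K : ℝ) (hT : 0 < T) (hK : 0 < K)
    (uν : ℕ → ℝ → ℝ → EuclideanSpace ℝ (Fin n))
    (u : ℝ → ℝ → EuclideanSpace ℝ (Fin n)) (Γ : ℝ → ℝ)
    (hΓ : Continuous Γ)
    (hmeasν : ∀ ν, Measurable (Function.uncurry (uν ν)))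
    (hmeas : Measurable (Function.uncurry u))
    (hconv : ∀ Kset : Set (ℝ × ℝ), IsCompact Kset →
      Tendsto (fun ν => ∫⁻ p in Kset, ‖uν ν p.1 p.2 - u p.1 p.2‖₊) atTop (nhds 0))
    (x₀ : ℝ) (hx₀ : 0 < x₀)
    (htraceν : ∀ ν, ∀ x ∈ Set.Ioc (0 : ℝ) x₀,
      (∫⁻ t in Set.Icc 0 T, ‖uν ν t (Γ t) - uν ν t (Γ t + x)‖₊) ≤ ENNReal.ofReal (K * x))
    (htrace : ∀ x ∈ Set.Ioc (0 : ℝ) x₀,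
      (∫⁻ t in Set.Icc 0 T, ‖u t (Γ t + x) - u t (Γ t)‖₊) ≤ ENNReal.ofReal (K * x)) :
    Tendsto (fun ν => ∫⁻ t in Set.Icc 0 T, ‖uν ν t (Γ t) - u t (Γ t)‖₊) atTop (nhds 0) := by
  classical
  have hΓm : Measurable Γ := hΓ.measurable
  -- f ν is the pointwise difference in ℝ≥0∞
  set f : ℕ → ℝ → ℝ → ℝ≥0∞ := fun ν t y => (‖uν ν t y - u t y‖₊ : ℝ≥0∞) with hfdef
  have hfm : ∀ ν, Measurable (fun p : ℝ × ℝ => f ν p.1 p.2) := fun ν =>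
    (((hmeasν ν).sub hmeas).nnnorm).coe_nnreal_ennreal
  -- bounds for Γ on [0,T]
  obtain ⟨m, hm⟩ := (isCompact_Icc.image hΓ).bddBelow
  obtain ⟨M, hM⟩ := (isCompact_Icc.image hΓ).bddAbove
  have hmΓ : ∀ t ∈ Icc (0:ℝ) T, m ≤ Γ t := fun t ht => hm ⟨t, ht, rfl⟩
  have hMΓ : ∀ t ∈ Icc (0:ℝ) T, Γ t ≤ M := fun t ht => hM ⟨t, ht, rfl⟩
  set Kset : Set (ℝ × ℝ) := Icc (0:ℝ) T ×ˢ Icc m (M + x₀) with hKsetdef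
  have hKsetc : IsCompact Kset := isCompact_Icc.prod isCompact_Icc
  set I : ℕ → ℝ≥0∞ := fun ν => ∫⁻ p in Kset, f ν p.1 p.2 with hIdef
  have hIconv : Tendsto I atTop (nhds 0) := hconv Kset hKsetc
  set L : ℕ → ℝ≥0∞ := fun ν => ∫⁻ t in Icc (0:ℝ) T, f ν t (Γ t) with hLdef
  show Tendsto L atTop (nhds 0)
  rw [ENNReal.tendsto_atTop_zero]
  intro ε hε
  -- choose a real ε' with 0 < ε', ofReal ε' ≤ ε
  set r : ℝ≥0∞ := min ε 1 with hrdef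
  have hr0 : r ≠ 0 := (lt_min hε zero_lt_one).ne'
  have hrtop : r ≠ ⊤ := by
    have : r ≤ 1 := min_le_right _ _
    exact (lt_of_le_of_lt this (by norm_num)).ne
  set εr : ℝ := r.toReal with hεrdef
  have hεr0 : 0 < εr := ENNReal.toReal_pos hr0 hrtop
  set δ : ℝ := min x₀ (εr / (4 * K)) with hδdef
  have hδ0 : 0 < δ := lt_min hx₀ (by positivity)
  have hδx₀ : δ ≤ x₀ := min_le_left _ _
  have h2Kδ : 2 * K * δ ≤ εr / 2 := by
    have : δ ≤ εr / (4 * K) := min_le_right _ _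
    rw [le_div_iff₀ (by positivity)] at this
    nlinarith
  -- pick N from convergence
  obtain ⟨N, hN⟩ := ENNReal.tendsto_atTop_zero.mp hIconv
    (ENNReal.ofReal (δ * (εr / 2))) (ENNReal.ofReal_pos.mpr (by positivity))
  refine ⟨N, fun ν hν => ?_⟩
  -- G ν x : translated trace difference integral
  set G : ℝ → ℝ≥0∞ := fun x => ∫⁻ t in Icc (0:ℝ) T, f ν t (Γ t + x) with hGdef
  have h1 : Measurable (fun p : ℝ × ℝ => (p.2, Γ p.2 + p.1)) :=
    measurable_snd.prodMk ((hΓm.comp measurable_snd).add measurable_fst)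
  have hF : Measurable (fun p : ℝ × ℝ => f ν p.2 (Γ p.2 + p.1)) :=
    ((((hmeasν ν).comp h1).sub (hmeas.comp h1)).nnnorm).coe_nnreal_ennreal
  have hGm : Measurable G :=
    Measurable.lintegral_prod_right (f := fun x t => f ν t (Γ t + x)) hF
  -- Step 1: pointwise (in x) bound on L ν
  have step1 : ∀ x ∈ Ioc (0:ℝ) δ, L ν ≤ ENNReal.ofReal (2 * K * δ) + G x := by
    intro x hx
    have hx' : x ∈ Ioc (0:ℝ) x₀ := ⟨hx.1, hx.2.trans hδx₀⟩
    have hmeas1 : Measurable fun t => (‖uν ν t (Γ t) - uν ν t (Γ t + x)‖₊ : ℝ≥0∞) := by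
      have h1 : Measurable fun t => uν ν t (Γ t) :=
        (hmeasν ν).comp (measurable_id.prodMk hΓm)
      have h2 : Measurable fun t => uν ν t (Γ t + x) :=
        (hmeasν ν).comp (measurable_id.prodMk (hΓm.add_const x))
      exact ((h1.sub h2).nnnorm).coe_nnreal_ennreal
    have hmeas2 : Measurable fun t => f ν t (Γ t + x) := by
      have h2 : Measurable (fun t : ℝ => (t, Γ t + x)) :=
        measurable_id.prodMk (hΓm.add_const x)
      exact ((((hmeasν ν).comp h2).sub (hmeas.comp h2)).nnnorm).coe_nnreal_ennreal
    have hmeas3 : Measurable fun t => (‖u t (Γ t + x) - u t (Γ t)‖₊ : ℝ≥0∞) := by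
      have h1 : Measurable fun t => u t (Γ t + x) :=
        hmeas.comp (measurable_id.prodMk (hΓm.add_const x))
      have h2 : Measurable fun t => u t (Γ t) :=
        hmeas.comp (measurable_id.prodMk hΓm)
      exact ((h1.sub h2).nnnorm).coe_nnreal_ennreal
    have tri : ∀ t, f ν t (Γ t) ≤
        (‖uν ν t (Γ t) - uν ν t (Γ t + x)‖₊ : ℝ≥0∞) + f ν t (Γ t + x)
          + (‖u t (Γ t + x) - u t (Γ t)‖₊ : ℝ≥0∞) := by
      intro t
      have key : ‖uν ν t (Γ t) - u t (Γ t)‖₊ ≤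
          ‖uν ν t (Γ t) - uν ν t (Γ t + x)‖₊ + ‖uν ν t (Γ t + x) - u t (Γ t + x)‖₊
            + ‖u t (Γ t + x) - u t (Γ t)‖₊ := by
        have h : uν ν t (Γ t) - u t (Γ t) =
            (uν ν t (Γ t) - uν ν t (Γ t + x)) + (uν ν t (Γ t + x) - u t (Γ t + x))
              + (u t (Γ t + x) - u t (Γ t)) := by abel
        rw [h]
        exact (nnnorm_add_le _ _).trans (add_le_add_left (nnnorm_add_le _ _) _)
      simpa [hfdef, ← ENNReal.coe_add] using ENNReal.coe_le_coe.mpr key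
    calc L ν ≤ ∫⁻ t in Icc (0:ℝ) T,
          ((‖uν ν t (Γ t) - uν ν t (Γ t + x)‖₊ : ℝ≥0∞) + f ν t (Γ t + x)
            + (‖u t (Γ t + x) - u t (Γ t)‖₊ : ℝ≥0∞)) := lintegral_mono tri
      _ = (∫⁻ t in Icc (0:ℝ) T, (‖uν ν t (Γ t) - uν ν t (Γ t + x)‖₊ : ℝ≥0∞))
            + G x + ∫⁻ t in Icc (0:ℝ) T, (‖u t (Γ t + x) - u t (Γ t)‖₊ : ℝ≥0∞) := by
          rw [lintegral_add_right _ hmeas3, lintegral_add_right _ hmeas2]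
      _ ≤ ENNReal.ofReal (K * x) + G x + ENNReal.ofReal (K * x) := by
          gcongr
          · exact htraceν ν x hx'
          · exact htrace x hx'
      _ ≤ ENNReal.ofReal (K * δ) + G x + ENNReal.ofReal (K * δ) := by
          have hKx : ENNReal.ofReal (K * x) ≤ ENNReal.ofReal (K * δ) :=
            ENNReal.ofReal_le_ofReal (by nlinarith [hx.2, hK])
          exact add_le_add (add_le_add hKx le_rfl) hKx
      _ = ENNReal.ofReal (2 * K * δ) + G x := by
          rw [add_right_comm, ← ENNReal.ofReal_add (by positivity) (by positivity)]
          ring_nf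
  -- Step 2: the averaged translated term is bounded by I ν
  have step2 : (∫⁻ x in Ioc (0:ℝ) δ, G x) ≤ I ν := by
    have hswap : (∫⁻ x in Ioc (0:ℝ) δ, G x)
        = ∫⁻ t in Icc (0:ℝ) T, ∫⁻ x in Ioc (0:ℝ) δ, f ν t (Γ t + x) := by
      exact lintegral_lintegral_swap hF.aemeasurable
    rw [hswap]
    have hpt : ∀ t ∈ Icc (0:ℝ) T,
        (∫⁻ x in Ioc (0:ℝ) δ, f ν t (Γ t + x)) ≤ ∫⁻ y in Icc m (M + x₀), f ν t y := by
      intro t ht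
      have htrans : (∫⁻ x in Ioc (0:ℝ) δ, f ν t (Γ t + x))
          = ∫⁻ y in Ioc (Γ t) (Γ t + δ), f ν t y := by
        have hpre : (fun x => Γ t + x) ⁻¹' Ioc (Γ t) (Γ t + δ) = Ioc (0:ℝ) δ := by
          ext x
          simp [Set.mem_Ioc]
        rw [← hpre]
        exact (measurePreserving_add_left volume (Γ t)).setLIntegral_comp_preimage_emb
          (measurableEmbedding_addLeft (Γ t)) _ _
      rw [htrans]
      refine lintegral_mono_set fun y hy => ?_
      exact ⟨(hmΓ t ht).trans hy.1.le, hy.2.trans (add_le_add (hMΓ t ht) hδx₀)⟩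
    calc (∫⁻ t in Icc (0:ℝ) T, ∫⁻ x in Ioc (0:ℝ) δ, f ν t (Γ t + x))
        ≤ ∫⁻ t in Icc (0:ℝ) T, ∫⁻ y in Icc m (M + x₀), f ν t y := by
          exact setLIntegral_mono
            (Measurable.lintegral_prod_right (f := fun t y => f ν t y) (hfm ν)) hpt
      _ = I ν := by
          have hprod : (∫⁻ p in (Icc (0:ℝ) T ×ˢ Icc m (M + x₀)), f ν p.1 p.2)
              = ∫⁻ t in Icc (0:ℝ) T, ∫⁻ y in Icc m (M + x₀), f ν t y := by
            rw [Measure.volume_eq_prod, ← Measure.prod_restrict]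
            exact lintegral_prod _ ((hfm ν).aemeasurable)
          exact hprod.symm
  -- Step 3: combine
  have hmul : ENNReal.ofReal δ * L ν ≤ ENNReal.ofReal δ * ENNReal.ofReal εr := by
    calc ENNReal.ofReal δ * L ν
        = ∫⁻ _ in Ioc (0:ℝ) δ, L ν := by
          rw [setLIntegral_const, Real.volume_Ioc, sub_zero, mul_comm]
      _ ≤ ∫⁻ x in Ioc (0:ℝ) δ, (ENNReal.ofReal (2 * K * δ) + G x) :=
          setLIntegral_mono (measurable_const.add hGm) step1
      _ = ENNReal.ofReal (2 * K * δ) * ENNReal.ofReal δ + ∫⁻ x in Ioc (0:ℝ) δ, G x := by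
          rw [lintegral_add_left measurable_const, setLIntegral_const, Real.volume_Ioc, sub_zero]
      _ ≤ ENNReal.ofReal (2 * K * δ) * ENNReal.ofReal δ + ENNReal.ofReal (δ * (εr / 2)) := by
          gcongr
          exact step2.trans (hN ν hν)
      _ ≤ ENNReal.ofReal δ * ENNReal.ofReal εr := by
          rw [← ENNReal.ofReal_mul (by positivity), ← ENNReal.ofReal_add (by positivity)
            (by positivity), ← ENNReal.ofReal_mul (by positivity)]
          refine ENNReal.ofReal_le_ofReal ?_
          nlinarith [hδ0, hεr0]
  have hL : L ν ≤ ENNReal.ofReal εr :=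
    (ENNReal.mul_le_mul_iff_right (by simp [ENNReal.ofReal_pos.mpr hδ0, (ENNReal.ofReal_pos.mpr hδ0).ne'])
      ENNReal.ofReal_ne_top).mp hmul
  calc L ν ≤ ENNReal.ofReal εr := hL
    _ = r := ENNReal.ofReal_toReal hrtop
    _ ≤ ε := min_le_left _ _
end
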